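/- Under the TI-with-exceptions kernel ridge regression setup, for every training pair (j,k) ∈ T the model prediction satisfies f(j,k) = m·y_{(j,k)} + (1 − m)(r_j − r_k), where m := α/(α + c̃⁻¹) and r_j := δ_o(b̄_j − b̄_{j−1}) + δ_o·h̄·([j = p] − [j = q]). -/

import Mathlib

open Real Matrix Finset

noncomputable section

namespace TIExc

/-- Real inverse hyperbolic cosine. -/
def arcosh (x : ℝ) : ℝ := Real.log (x + Real.sqrt (x ^ 2 - 1))

/-- Training index set: adjacent pairs in both orders plus the exception pair in both orders. -/
def T (n p q : ℕ) : Finset (ℕ × ℕ) :=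
  ((Finset.Icc 1 (n - 1)).image fun j => (j, j + 1)) ∪
    ((Finset.Icc 1 (n - 1)).image fun j => (j + 1, j)) ∪ {(p, q), (q, p)}

/-- Exchangeable kernel on ordered pairs of items. -/
def ker (κs κo κd : ℝ) (u u' : ℕ × ℕ) : ℝ :=
  if u = u' then κs else if u.1 = u'.1 ∨ u.2 = u'.2 then κo else κd

/-- Training labels. -/
def lab (p q : ℕ) (u : ℕ × ℕ) : ℝ :=
  if u = (p, q) then 1 else if u = (q, p) then -1 else if u.1 < u.2 then 1 else -1

/-- The training-set kernel matrix. -/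
def Kmat (n p q : ℕ) (κs κo κd : ℝ) : Matrix ↥(T n p q) ↥(T n p q) ℝ :=
  fun u u' => ker κs κo κd u.1 u'.1

/-- Dual coefficients `a = (K + c⁻¹ I)⁻¹ y`. -/
def dual (n p q : ℕ) (κs κo κd c : ℝ) : ↥(T n p q) → ℝ :=
  (Kmat n p q κs κo κd + c⁻¹ • (1 : Matrix ↥(T n p q) ↥(T n p q) ℝ))⁻¹ *ᵥ
    fun u => lab p q u.1

/-- Dual coefficient at an ordered pair (`0` off the training set). -/
def aAt (n p q : ℕ) (κs κo κd c : ℝ) (u : ℕ × ℕ) : ℝ :=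
  if h : u ∈ T n p q then dual n p q κs κo κd c ⟨u, h⟩ else 0

/-- `b̄ⱼ = a₍ⱼ,ⱼ₊₁₎`, with the convention `b̄₀ = b̄ₙ = 0`. -/
def bbar (n p q : ℕ) (κs κo κd c : ℝ) (j : ℕ) : ℝ :=
  aAt n p q κs κo κd c (j, j + 1)

/-- `h̄ = a₍ₚ,q₎`. -/
def hbar (n p q : ℕ) (κs κo κd c : ℝ) : ℝ :=
  aAt n p q κs κo κd c (p, q)

/-- Model prediction `f(u) = ∑_{u' ∈ T} κ(u,u') a_{u'}`. -/
def pred (n p q : ℕ) (κs κo κd c : ℝ) (u : ℕ × ℕ) : ℝ :=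
  ∑ u' : ↥(T n p q), ker κs κo κd u u'.1 * dual n p q κs κo κd c u'

/-- Emergent rank `rⱼ = δₒ(b̄ⱼ − b̄ⱼ₋₁) + δₒ h̄ ([j = p] − [j = q])`. -/
def rank (n p q : ℕ) (κs κo κd c : ℝ) (j : ℕ) : ℝ :=
  (κo - κd) * (bbar n p q κs κo κd c j - bbar n p q κs κo κd c (j - 1)) +
    (κo - κd) * hbar n p q κs κo κd c *
      ((if j = p then 1 else 0) - (if j = q then 1 else 0))

/-- `λ = arccosh((1 + c̃⁻¹)/(1 − α))`. -/
def lam (α ctil : ℝ) : ℝ := arcosh ((1 + ctil⁻¹) / (1 - α))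

/-- The no-exception TI rank `r_j^TI`. -/
def rTI (n : ℕ) (l : ℝ) (j : ℕ) : ℝ :=
  Real.sinh ((((n : ℝ) + 1) / 2 - (j : ℝ)) * l) /
    (Real.sinh (((n : ℝ) + 1) / 2 * l) - Real.sinh (((n : ℝ) - 1) / 2 * l))

/-- `D̃ᵢⱼ = cosh((min(i,j) − 1/2)λ)·cosh((n − max(i,j) + 1/2)λ)`. -/
def Dtil (n : ℕ) (l : ℝ) (i j : ℕ) : ℝ :=
  Real.cosh (((min i j : ℕ) - (1 : ℝ) / 2) * l) *
    Real.cosh (((n : ℝ) - (max i j : ℕ) + 1 / 2) * l)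

/-- The quantity `G`. -/
def Gq (n p q : ℕ) (l : ℝ) : ℝ :=
  Real.cosh (((q : ℝ) - 1 / 2) * l) *
      Real.sinh (((n : ℝ) - ((p : ℝ) + (q : ℝ) - 1) / 2) * l) +
    Real.cosh (((n : ℝ) - (p : ℝ) + 1 / 2) * l) *
      Real.sinh ((((p : ℝ) + (q : ℝ) - 1) / 2) * l)



section Aux

variable (n p q : ℕ) (κs κo κd c : ℝ)

/-- Arithmetic characterization of membership in the training set. -/
lemma pair_mem_T_iff (j k : ℕ) :
    (j, k) ∈ T n p q ↔ (1 ≤ j ∧ j ≤ n - 1 ∧ k = j + 1) ∨ (1 ≤ k ∧ k ≤ n - 1 ∧ j = k + 1) ∨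
      (j = p ∧ k = q) ∨ (j = q ∧ k = p) := by
  constructor
  · intro h
    simp only [T, Finset.mem_union, Finset.mem_image, Finset.mem_Icc, Finset.mem_insert,
      Finset.mem_singleton] at h
    rcases h with ((⟨i, hi, he⟩ | ⟨i, hi, he⟩) | (he | he)) <;>
      (rw [Prod.mk.injEq] at he) <;> omega
  · intro h
    simp only [T, Finset.mem_union, Finset.mem_image, Finset.mem_Icc, Finset.mem_insert,
      Finset.mem_singleton]
    rcases h with ⟨h1, h2, rfl⟩ | ⟨h1, h2, he⟩ | ⟨rfl, rfl⟩ | ⟨rfl, rfl⟩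
    · exact Or.inl (Or.inl ⟨j, ⟨h1, h2⟩, rfl⟩)
    · exact Or.inl (Or.inr ⟨k, ⟨h1, h2⟩, by rw [he]⟩)
    · exact Or.inr (Or.inl rfl)
    · exact Or.inr (Or.inr rfl)

lemma swap_mem_T {j k : ℕ} (h : (j, k) ∈ T n p q) : (k, j) ∈ T n p q := by
  rw [pair_mem_T_iff] at h ⊢; omega

lemma lab_swap (hqp : q < p) (hgap : 2 ≤ p - q) {j k : ℕ} (h : (j, k) ∈ T n p q) :
    lab p q (k, j) = - lab p q (j, k) := by
  rw [pair_mem_T_iff] at h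
  unfold lab
  simp only [Prod.mk.injEq]
  split_ifs <;> (try norm_num) <;> omega

lemma ker_symm (u v : ℕ × ℕ) : ker κs κo κd u v = ker κs κo κd v u := by
  unfold ker
  rcases eq_or_ne u v with h | h
  · simp [h]
  · rw [if_neg h, if_neg (Ne.symm h)]
    by_cases h1 : u.1 = v.1 ∨ u.2 = v.2
    · rw [if_pos h1, if_pos (by omega)]
    · rw [if_neg h1, if_neg (by omega)]

lemma ker_swap (u v : ℕ × ℕ) :
    ker κs κo κd (u.2, u.1) (v.2, v.1) = ker κs κo κd u v := by
  unfold ker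
  have he : ((u.2, u.1) = (v.2, v.1)) ↔ (u = v) := by
    constructor
    · intro h; rw [Prod.mk.injEq] at h; exact Prod.ext h.2 h.1
    · intro h; rw [h]
  rcases eq_or_ne u v with h | h
  · rw [if_pos (he.mpr h), if_pos h]
  · rw [if_neg (fun hh => h (he.mp hh)), if_neg h]
    by_cases h1 : u.1 = v.1 ∨ u.2 = v.2
    · rw [if_pos (by omega : (u.2, u.1).1 = (v.2, v.1).1 ∨ (u.2, u.1).2 = (v.2, v.1).2),
        if_pos h1]
    · rw [if_neg (by omega : ¬((u.2, u.1).1 = (v.2, v.1).1 ∨ (u.2, u.1).2 = (v.2, v.1).2)),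
        if_neg h1]

lemma ker_decomp (u w : ℕ × ℕ) :
    ker κs κo κd u w = κd
      + (κo - κd) * ((if w.1 = u.1 then (1:ℝ) else 0) + (if w.2 = u.2 then (1:ℝ) else 0))
      + (κs - 2 * κo + κd) * (if u = w then (1:ℝ) else 0) := by
  unfold ker
  by_cases h1 : w.1 = u.1 <;> by_cases h2 : w.2 = u.2
  · have h3 : u = w := (Prod.ext h1 h2).symm
    rw [if_pos h3, if_pos h1, if_pos h2, if_pos h3]; ring
  · have h3 : ¬ u = w := fun h => h2 (by rw [h])
    have h4 : u.1 = w.1 ∨ u.2 = w.2 := Or.inl h1.symm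
    rw [if_neg h3, if_pos h4, if_pos h1, if_neg h2, if_neg h3]; ring
  · have h3 : ¬ u = w := fun h => h1 (by rw [h])
    have h4 : u.1 = w.1 ∨ u.2 = w.2 := Or.inr h2.symm
    rw [if_neg h3, if_pos h4, if_neg h1, if_pos h2, if_neg h3]; ring
  · have h3 : ¬ u = w := fun h => h1 (by rw [h])
    have h4 : ¬ (u.1 = w.1 ∨ u.2 = w.2) := by
      rintro (h | h)
      · exact h1 h.symm
      · exact h2 h.symm
    rw [if_neg h3, if_neg h4, if_neg h1, if_neg h2, if_neg h3]; ring

/-- The regularized kernel matrix. -/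
def Mker : Matrix ↥(T n p q) ↥(T n p q) ℝ :=
  Kmat n p q κs κo κd + c⁻¹ • (1 : Matrix ↥(T n p q) ↥(T n p q) ℝ)

lemma Mker_apply (u v : ↥(T n p q)) :
    Mker n p q κs κo κd c u v
      = ker κs κo κd u.1 v.1 + c⁻¹ * (if u = v then (1:ℝ) else 0) := by
  simp [Mker, Kmat, Matrix.add_apply, Matrix.smul_apply, Matrix.one_apply]

lemma Mker_herm : (Mker n p q κs κo κd c).IsHermitian := by
  rw [Matrix.IsHermitian]
  ext u v
  simp only [Matrix.conjTranspose_apply, star_trivial, Mker_apply]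
  rw [ker_symm]
  rcases eq_or_ne u v with h | h
  · rw [if_pos h.symm, if_pos h]
  · rw [if_neg (Ne.symm h), if_neg h]

lemma mulVec_apply_eq (G : ℕ × ℕ → ℝ) (u : ↥(T n p q)) :
    (Mker n p q κs κo κd c *ᵥ fun w => G w.1) u
      = (∑ z ∈ T n p q, ker κs κo κd u.1 z * G z) + c⁻¹ * G u.1 := by
  show ∑ v : ↥(T n p q), Mker n p q κs κo κd c u v * G v.1 = _
  have h2 : ∀ v : ↥(T n p q), Mker n p q κs κo κd c u v * G v.1
      = ker κs κo κd u.1 v.1 * G v.1 + c⁻¹ * (if u = v then G v.1 else 0) := by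
    intro v; rw [Mker_apply]; split_ifs <;> ring
  rw [Fintype.sum_congr _ _ h2, Finset.sum_add_distrib, ← Finset.mul_sum,
    Finset.sum_ite_eq, if_pos (Finset.mem_univ u),
    Finset.sum_coe_sort (T n p q) (fun z => ker κs κo κd u.1 z * G z)]

lemma gram_nonneg {α β : Type*} [DecidableEq β] (s : Finset α) (g : α → β) (X : α → ℝ) :
    0 ≤ ∑ v ∈ s, X v * ∑ w ∈ s, (if g w = g v then X w else 0) := by
  classical
  have hmaps : ∀ v ∈ s, g v ∈ s.image g := fun v hv => Finset.mem_image_of_mem _ hv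
  rw [← Finset.sum_fiberwise_of_maps_to hmaps
    (fun v => X v * ∑ w ∈ s, (if g w = g v then X w else 0))]
  refine Finset.sum_nonneg fun j _ => ?_
  have h1 : ∀ v ∈ s.filter (fun v => g v = j),
      X v * (∑ w ∈ s, (if g w = g v then X w else 0))
        = X v * ∑ w ∈ s, (if g w = j then X w else 0) := by
    intro v hv
    rw [(Finset.mem_filter.mp hv).2]
  rw [Finset.sum_congr rfl h1, ← Finset.sum_mul, Finset.sum_filter]
  exact mul_self_nonneg _

lemma Mker_posdef (hκd : 0 ≤ κd) (hκo : κd < κo) (hκs : 2 * (κo - κd) ≤ κs - κd)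
    (hc : 0 < c) : (Mker n p q κs κo κd c).PosDef := by
  classical
  refine Matrix.PosDef.of_dotProduct_mulVec_pos (Mker_herm n p q κs κo κd c) fun x hx => ?_
  set X : ℕ × ℕ → ℝ := fun v => if h : v ∈ T n p q then x ⟨v, h⟩ else 0 with hXdef
  have hXcoe : ∀ v : ↥(T n p q), X v.1 = x v := fun v => dif_pos v.2
  have hxX : x = fun w : ↥(T n p q) => X w.1 := funext fun w => (hXcoe w).symm
  have hstar : star x = x := funext fun i => star_trivial (x i)
  rw [hstar, hxX]
  have hdot : (fun w : ↥(T n p q) => X w.1) ⬝ᵥ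
        (Mker n p q κs κo κd c *ᵥ fun w : ↥(T n p q) => X w.1)
      = ∑ v ∈ T n p q, X v * ((∑ z ∈ T n p q, ker κs κo κd v z * X z) + c⁻¹ * X v) := by
    show ∑ u : ↥(T n p q),
        X u.1 * (Mker n p q κs κo κd c *ᵥ fun w : ↥(T n p q) => X w.1) u = _
    calc ∑ u : ↥(T n p q),
          X u.1 * (Mker n p q κs κo κd c *ᵥ fun w : ↥(T n p q) => X w.1) u
        = ∑ u : ↥(T n p q),
            X u.1 * ((∑ z ∈ T n p q, ker κs κo κd u.1 z * X z) + c⁻¹ * X u.1) :=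
          Finset.sum_congr rfl fun u _ => by rw [mulVec_apply_eq]
      _ = _ := Finset.sum_coe_sort (T n p q)
            (fun v => X v * ((∑ z ∈ T n p q, ker κs κo κd v z * X z) + c⁻¹ * X v))
  rw [hdot]
  have expand : ∀ v ∈ T n p q, ∑ z ∈ T n p q, ker κs κo κd v z * X z
      = κd * (∑ z ∈ T n p q, X z)
        + (κo - κd) * ((∑ z ∈ T n p q, (if z.1 = v.1 then X z else 0))
            + (∑ z ∈ T n p q, (if z.2 = v.2 then X z else 0)))
        + (κs - 2 * κo + κd) * X v := by
    intro v hv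
    have hterm : ∀ z ∈ T n p q, ker κs κo κd v z * X z
        = κd * X z + (κo - κd) * ((if z.1 = v.1 then X z else 0)
            + (if z.2 = v.2 then X z else 0))
          + (κs - 2 * κo + κd) * (if v = z then X z else 0) := by
      intro z _
      rw [ker_decomp]
      split_ifs <;> ring
    rw [Finset.sum_congr rfl hterm, Finset.sum_add_distrib, Finset.sum_add_distrib,
      ← Finset.mul_sum, ← Finset.mul_sum, ← Finset.mul_sum, Finset.sum_add_distrib,
      Finset.sum_ite_eq (T n p q) v X, if_pos hv]
  have hpt : ∀ v ∈ T n p q,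
      X v * ((∑ z ∈ T n p q, ker κs κo κd v z * X z) + c⁻¹ * X v)
        = κd * (X v * ∑ z ∈ T n p q, X z)
          + (κo - κd) * (X v * (∑ z ∈ T n p q, (if z.1 = v.1 then X z else 0))
              + X v * (∑ z ∈ T n p q, (if z.2 = v.2 then X z else 0)))
          + ((κs - 2 * κo + κd) + c⁻¹) * (X v * X v) := by
    intro v hv; rw [expand v hv]; ring
  rw [Finset.sum_congr rfl hpt, Finset.sum_add_distrib, Finset.sum_add_distrib,
    ← Finset.mul_sum, ← Finset.mul_sum, ← Finset.mul_sum, Finset.sum_add_distrib,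
    ← Finset.sum_mul]
  have h1 : 0 ≤ ∑ v ∈ T n p q, X v * ∑ z ∈ T n p q, (if z.1 = v.1 then X z else 0) :=
    gram_nonneg (T n p q) Prod.fst X
  have h2 : 0 ≤ ∑ v ∈ T n p q, X v * ∑ z ∈ T n p q, (if z.2 = v.2 then X z else 0) :=
    gram_nonneg (T n p q) Prod.snd X
  have h4 : 0 ≤ (∑ v ∈ T n p q, X v) * ∑ z ∈ T n p q, X z := mul_self_nonneg _
  obtain ⟨u0, hu0⟩ := Function.ne_iff.mp hx
  have hxu0 : x u0 ≠ 0 := by simpa using hu0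
  have h5 : 0 < ∑ v ∈ T n p q, X v * X v := by
    refine Finset.sum_pos' (fun v _ => mul_self_nonneg _) ⟨u0.1, u0.2, ?_⟩
    have hXu : X u0.1 = x u0 := hXcoe u0
    exact mul_self_pos.mpr (by rw [hXu]; exact hxu0)
  have hβc : 0 < (κs - 2 * κo + κd) + c⁻¹ := by
    have := inv_pos.mpr hc; linarith
  have hκo' : (0:ℝ) ≤ κo - κd := by linarith
  nlinarith [mul_nonneg hκd h4, mul_nonneg hκo' (add_nonneg h1 h2), mul_pos hβc h5]

lemma dual_spec (hκd : 0 ≤ κd) (hκo : κd < κo) (hκs : 2 * (κo - κd) ≤ κs - κd)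
    (hc : 0 < c) :
    Mker n p q κs κo κd c *ᵥ dual n p q κs κo κd c = fun u => lab p q u.1 := by
  have hdet : IsUnit (Mker n p q κs κo κd c).det :=
    isUnit_iff_ne_zero.mpr (Mker_posdef n p q κs κo κd c hκd hκo hκs hc).det_pos.ne'
  show Mker n p q κs κo κd c *ᵥ
      ((Mker n p q κs κo κd c)⁻¹ *ᵥ fun u => lab p q u.1) = _
  rw [Matrix.mulVec_mulVec, Matrix.mul_nonsing_inv _ hdet, Matrix.one_mulVec]

lemma dual_unique (hκd : 0 ≤ κd) (hκo : κd < κo) (hκs : 2 * (κo - κd) ≤ κs - κd)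
    (hc : 0 < c) (v : ↥(T n p q) → ℝ)
    (hv : Mker n p q κs κo κd c *ᵥ v = fun u => lab p q u.1) :
    v = dual n p q κs κo κd c := by
  have hdet : IsUnit (Mker n p q κs κo κd c).det :=
    isUnit_iff_ne_zero.mpr (Mker_posdef n p q κs κo κd c hκd hκo hκs hc).det_pos.ne'
  have h2 : (Mker n p q κs κo κd c)⁻¹ *ᵥ (Mker n p q κs κo κd c *ᵥ v) = v := by
    rw [Matrix.mulVec_mulVec, Matrix.nonsing_inv_mul _ hdet, Matrix.one_mulVec]
  rw [← h2, hv]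
  rfl

lemma aAt_coe (w : ↥(T n p q)) :
    aAt n p q κs κo κd c w.1 = dual n p q κs κo κd c w := dif_pos w.2

lemma aAt_eq (hκd : 0 ≤ κd) (hκo : κd < κo) (hκs : 2 * (κo - κd) ≤ κs - κd)
    (hc : 0 < c) {u : ℕ × ℕ} (hu : u ∈ T n p q) :
    (∑ z ∈ T n p q, ker κs κo κd u z * aAt n p q κs κo κd c z)
      + c⁻¹ * aAt n p q κs κo κd c u = lab p q u := by
  have hd : dual n p q κs κo κd c = fun w : ↥(T n p q) => aAt n p q κs κo κd c w.1 :=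
    funext fun w => (aAt_coe n p q κs κo κd c w).symm
  have hs := congrFun (dual_spec n p q κs κo κd c hκd hκo hκs hc) ⟨u, hu⟩
  rw [hd, mulVec_apply_eq] at hs
  exact hs

lemma aAt_swap (hqp : q < p) (hgap : 2 ≤ p - q) (hκd : 0 ≤ κd) (hκo : κd < κo)
    (hκs : 2 * (κo - κd) ≤ κs - κd) (hc : 0 < c) (j k : ℕ) :
    aAt n p q κs κo κd c (k, j) = - aAt n p q κs κo κd c (j, k) := by
  by_cases h : (j, k) ∈ T n p q
  · have hveq : (fun w : ↥(T n p q) => - aAt n p q κs κo κd c (w.1.2, w.1.1))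
        = dual n p q κs κo κd c := by
      apply dual_unique n p q κs κo κd c hκd hκo hκs hc
      funext u
      have hmem : ((u.1.2, u.1.1) : ℕ × ℕ) ∈ T n p q := swap_mem_T n p q u.2
      rw [mulVec_apply_eq n p q κs κo κd c
        (fun z => - aAt n p q κs κo κd c (z.2, z.1)) u]
      have hre : ∑ z ∈ T n p q, ker κs κo κd u.1 z * - aAt n p q κs κo κd c (z.2, z.1)
          = - ∑ z ∈ T n p q,
              ker κs κo κd (u.1.2, u.1.1) z * aAt n p q κs κo κd c z := by
        rw [← Finset.sum_neg_distrib]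
        refine Finset.sum_nbij' (fun z => (z.2, z.1)) (fun z => (z.2, z.1))
          (fun z hz => swap_mem_T n p q hz) (fun z hz => swap_mem_T n p q hz)
          (fun z _ => rfl) (fun z _ => rfl) (fun z _ => ?_)
        rw [ker_swap]
        ring
      rw [hre]
      have h2 := aAt_eq n p q κs κo κd c hκd hκo hκs hc hmem
      have h3 : lab p q (u.1.2, u.1.1) = - lab p q (u.1.1, u.1.2) :=
        lab_swap n p q hqp hgap u.2
      have h4 : lab p q (u.1.1, u.1.2) = lab p q u.1 := rfl
      rw [h3, h4] at h2
      linarith [h2]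
    have h' : (k, j) ∈ T n p q := swap_mem_T n p q h
    have h5 : aAt n p q κs κo κd c (j, k) = dual n p q κs κo κd c ⟨(j, k), h⟩ :=
      aAt_coe n p q κs κo κd c ⟨(j, k), h⟩
    have h6 : - aAt n p q κs κo κd c (k, j) = dual n p q κs κo κd c ⟨(j, k), h⟩ :=
      congrFun hveq ⟨(j, k), h⟩
    rw [← h5] at h6
    linarith [h6]
  · have h' : (k, j) ∉ T n p q := fun hc' => h (swap_mem_T n p q hc')
    unfold aAt
    rw [dif_neg h', dif_neg h, neg_zero]

lemma sum_T_eq (hqp : q < p) (hgap : 2 ≤ p - q) (F : ℕ × ℕ → ℝ) :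
    ∑ v ∈ T n p q, F v
      = (∑ i ∈ Finset.Icc 1 (n - 1), F (i, i + 1))
        + (∑ i ∈ Finset.Icc 1 (n - 1), F (i + 1, i)) + F (p, q) + F (q, p) := by
  have hd12 : Disjoint ((Finset.Icc 1 (n - 1)).image fun j => (j, j + 1))
      ((Finset.Icc 1 (n - 1)).image fun j => (j + 1, j)) := by
    rw [Finset.disjoint_left]
    intro a ha hb
    rw [Finset.mem_image] at ha hb
    obtain ⟨i, _, rfl⟩ := ha
    obtain ⟨i', _, he⟩ := hb
    rw [Prod.mk.injEq] at he
    omega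
  have hdE : Disjoint (((Finset.Icc 1 (n - 1)).image fun j => (j, j + 1)) ∪
      ((Finset.Icc 1 (n - 1)).image fun j => (j + 1, j)))
      ({(p, q), (q, p)} : Finset (ℕ × ℕ)) := by
    rw [Finset.disjoint_right]
    intro a ha hb
    rw [Finset.mem_insert, Finset.mem_singleton] at ha
    rw [Finset.mem_union, Finset.mem_image, Finset.mem_image] at hb
    rcases hb with ⟨i, _, he⟩ | ⟨i, _, he⟩ <;> rcases ha with rfl | rfl <;>
      (rw [Prod.mk.injEq] at he; omega)
  have hinj1 : ∀ x ∈ Finset.Icc 1 (n - 1), ∀ y ∈ Finset.Icc 1 (n - 1),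
      (x, x + 1) = (y, y + 1) → x = y := by
    intro x _ y _ h; rw [Prod.mk.injEq] at h; omega
  have hinj2 : ∀ x ∈ Finset.Icc 1 (n - 1), ∀ y ∈ Finset.Icc 1 (n - 1),
      (x + 1, x) = (y + 1, y) → x = y := by
    intro x _ y _ h; rw [Prod.mk.injEq] at h; omega
  have hne : ((p, q) : ℕ × ℕ) ≠ (q, p) := by
    rw [Ne, Prod.mk.injEq]; omega
  rw [show T n p q = (((Finset.Icc 1 (n - 1)).image fun j => (j, j + 1)) ∪
      ((Finset.Icc 1 (n - 1)).image fun j => (j + 1, j))) ∪ {(p, q), (q, p)} from rfl,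
    Finset.sum_union hdE, Finset.sum_union hd12, Finset.sum_image hinj1,
    Finset.sum_image hinj2, Finset.sum_pair hne]
  ring

lemma bbar_zero (hqp : q < p) (hgap : 2 ≤ p - q) {m : ℕ}
    (hm : ¬(1 ≤ m ∧ m ≤ n - 1)) : bbar n p q κs κo κd c m = 0 := by
  unfold bbar aAt
  rw [dif_neg]
  rw [pair_mem_T_iff]
  omega

lemma sum_fst (hqp : q < p) (hgap : 2 ≤ p - q) (hκd : 0 ≤ κd) (hκo : κd < κo)
    (hκs : 2 * (κo - κd) ≤ κs - κd) (hc : 0 < c) (j : ℕ) :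
    ∑ v ∈ T n p q, (if v.1 = j then aAt n p q κs κo κd c v else 0)
      = bbar n p q κs κo κd c j - bbar n p q κs κo κd c (j - 1)
        + hbar n p q κs κo κd c
          * ((if j = p then (1:ℝ) else 0) - (if j = q then (1:ℝ) else 0)) := by
  rw [sum_T_eq n p q hqp hgap]
  have e1 : ∑ i ∈ Finset.Icc 1 (n - 1),
      (if ((i, i + 1) : ℕ × ℕ).1 = j then aAt n p q κs κo κd c (i, i + 1) else 0)
      = bbar n p q κs κo κd c j := by
    have : ∀ i ∈ Finset.Icc 1 (n - 1),
        (if ((i, i + 1) : ℕ × ℕ).1 = j then aAt n p q κs κo κd c (i, i + 1) else 0)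
          = (if i = j then aAt n p q κs κo κd c (i, i + 1) else 0) := fun i _ => rfl
    rw [Finset.sum_congr rfl this, Finset.sum_ite_eq' (Finset.Icc 1 (n - 1)) j
      (fun i => aAt n p q κs κo κd c (i, i + 1))]
    by_cases hj : j ∈ Finset.Icc 1 (n - 1)
    · rw [if_pos hj]; rfl
    · rw [if_neg hj]
      exact (bbar_zero n p q κs κo κd c hqp hgap
        (by rwa [Finset.mem_Icc] at hj)).symm
  have e2 : ∑ i ∈ Finset.Icc 1 (n - 1),
      (if ((i + 1, i) : ℕ × ℕ).1 = j then aAt n p q κs κo κd c (i + 1, i) else 0)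
      = - bbar n p q κs κo κd c (j - 1) := by
    rcases Nat.eq_zero_or_pos j with hj0 | hj1
    · subst hj0
      rw [Finset.sum_eq_zero (fun i hi => if_neg (by omega))]
      rw [bbar_zero n p q κs κo κd c hqp hgap (by omega), neg_zero]
    · obtain ⟨m, rfl⟩ : ∃ m, j = m + 1 := ⟨j - 1, by omega⟩
      have hcong : ∀ i ∈ Finset.Icc 1 (n - 1),
          (if ((i + 1, i) : ℕ × ℕ).1 = m + 1 then aAt n p q κs κo κd c (i + 1, i) else 0)
            = (if i = m then aAt n p q κs κo κd c (i + 1, i) else 0) := by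
        intro i _
        by_cases h : i = m
        · rw [if_pos (by omega : ((i + 1, i) : ℕ × ℕ).1 = m + 1), if_pos h]
        · rw [if_neg (by omega : ¬((i + 1, i) : ℕ × ℕ).1 = m + 1), if_neg h]
      rw [Finset.sum_congr rfl hcong, Finset.sum_ite_eq' (Finset.Icc 1 (n - 1)) m
        (fun i => aAt n p q κs κo κd c (i + 1, i))]
      have hms : m + 1 - 1 = m := by omega
      rw [hms]
      by_cases hm : m ∈ Finset.Icc 1 (n - 1)
      · rw [if_pos hm, aAt_swap n p q κs κo κd c hqp hgap hκd hκo hκs hc m (m + 1)]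
        rfl
      · rw [if_neg hm, bbar_zero n p q κs κo κd c hqp hgap
          (by rwa [Finset.mem_Icc] at hm), neg_zero]
  rw [e1, e2]
  have e3 : aAt n p q κs κo κd c (q, p) = - hbar n p q κs κo κd c :=
    aAt_swap n p q κs κo κd c hqp hgap hκd hκo hκs hc p q
  have e4 : aAt n p q κs κo κd c (p, q) = hbar n p q κs κo κd c := rfl
  by_cases hp : ((p, q) : ℕ × ℕ).1 = j <;> by_cases hq : ((q, p) : ℕ × ℕ).1 = j
  · omega
  · rw [if_pos hp, if_neg hq, e4, if_pos (by omega : j = p), if_neg (by omega : ¬ j = q)]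
    ring
  · rw [if_neg hp, if_pos hq, e3, if_neg (by omega : ¬ j = p), if_pos (by omega : j = q)]
    ring
  · rw [if_neg hp, if_neg hq, if_neg (by omega : ¬ j = p), if_neg (by omega : ¬ j = q)]
    ring

lemma sum_snd (hqp : q < p) (hgap : 2 ≤ p - q) (hκd : 0 ≤ κd) (hκo : κd < κo)
    (hκs : 2 * (κo - κd) ≤ κs - κd) (hc : 0 < c) (k : ℕ) :
    ∑ v ∈ T n p q, (if v.2 = k then aAt n p q κs κo κd c v else 0)
      = - (bbar n p q κs κo κd c k - bbar n p q κs κo κd c (k - 1)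
        + hbar n p q κs κo κd c
          * ((if k = p then (1:ℝ) else 0) - (if k = q then (1:ℝ) else 0))) := by
  rw [sum_T_eq n p q hqp hgap]
  have e1 : ∑ i ∈ Finset.Icc 1 (n - 1),
      (if ((i, i + 1) : ℕ × ℕ).2 = k then aAt n p q κs κo κd c (i, i + 1) else 0)
      = bbar n p q κs κo κd c (k - 1) := by
    rcases Nat.eq_zero_or_pos k with hk0 | hk1
    · subst hk0
      rw [Finset.sum_eq_zero (fun i hi => if_neg (by omega))]
      rw [bbar_zero n p q κs κo κd c hqp hgap (by omega)]
    · obtain ⟨m, rfl⟩ : ∃ m, k = m + 1 := ⟨k - 1, by omega⟩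
      have hcong : ∀ i ∈ Finset.Icc 1 (n - 1),
          (if ((i, i + 1) : ℕ × ℕ).2 = m + 1 then aAt n p q κs κo κd c (i, i + 1) else 0)
            = (if i = m then aAt n p q κs κo κd c (i, i + 1) else 0) := by
        intro i _
        by_cases h : i = m
        · rw [if_pos (by omega : ((i, i + 1) : ℕ × ℕ).2 = m + 1), if_pos h]
        · rw [if_neg (by omega : ¬((i, i + 1) : ℕ × ℕ).2 = m + 1), if_neg h]
      rw [Finset.sum_congr rfl hcong, Finset.sum_ite_eq' (Finset.Icc 1 (n - 1)) m
        (fun i => aAt n p q κs κo κd c (i, i + 1))]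
      have hms : m + 1 - 1 = m := by omega
      rw [hms]
      by_cases hm : m ∈ Finset.Icc 1 (n - 1)
      · rw [if_pos hm]; rfl
      · rw [if_neg hm]
        exact (bbar_zero n p q κs κo κd c hqp hgap
          (by rwa [Finset.mem_Icc] at hm)).symm
  have e2 : ∑ i ∈ Finset.Icc 1 (n - 1),
      (if ((i + 1, i) : ℕ × ℕ).2 = k then aAt n p q κs κo κd c (i + 1, i) else 0)
      = - bbar n p q κs κo κd c k := by
    have : ∀ i ∈ Finset.Icc 1 (n - 1),
        (if ((i + 1, i) : ℕ × ℕ).2 = k then aAt n p q κs κo κd c (i + 1, i) else 0)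
          = (if i = k then aAt n p q κs κo κd c (i + 1, i) else 0) := fun i _ => rfl
    rw [Finset.sum_congr rfl this, Finset.sum_ite_eq' (Finset.Icc 1 (n - 1)) k
      (fun i => aAt n p q κs κo κd c (i + 1, i))]
    by_cases hk : k ∈ Finset.Icc 1 (n - 1)
    · rw [if_pos hk, aAt_swap n p q κs κo κd c hqp hgap hκd hκo hκs hc k (k + 1)]
      rfl
    · rw [if_neg hk, bbar_zero n p q κs κo κd c hqp hgap
        (by rwa [Finset.mem_Icc] at hk), neg_zero]
  rw [e1, e2]
  have e3 : aAt n p q κs κo κd c (q, p) = - hbar n p q κs κo κd c :=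
    aAt_swap n p q κs κo κd c hqp hgap hκd hκo hκs hc p q
  have e4 : aAt n p q κs κo κd c (p, q) = hbar n p q κs κo κd c := rfl
  by_cases hp : ((q, p) : ℕ × ℕ).2 = k <;> by_cases hq : ((p, q) : ℕ × ℕ).2 = k
  · omega
  · rw [if_neg hq, if_pos hp, e3, if_pos (by omega : k = p), if_neg (by omega : ¬ k = q)]
    ring
  · rw [if_pos hq, if_neg hp, e4, if_neg (by omega : ¬ k = p), if_pos (by omega : k = q)]
    ring
  · rw [if_neg hq, if_neg hp, if_neg (by omega : ¬ k = p), if_neg (by omega : ¬ k = q)]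
    ring

lemma sum_all (hqp : q < p) (hgap : 2 ≤ p - q) (hκd : 0 ≤ κd) (hκo : κd < κo)
    (hκs : 2 * (κo - κd) ≤ κs - κd) (hc : 0 < c) :
    ∑ v ∈ T n p q, aAt n p q κs κo κd c v = 0 := by
  rw [sum_T_eq n p q hqp hgap]
  have h1 : ∀ i ∈ Finset.Icc 1 (n - 1),
      aAt n p q κs κo κd c (i + 1, i) = - aAt n p q κs κo κd c (i, i + 1) :=
    fun i _ => aAt_swap n p q κs κo κd c hqp hgap hκd hκo hκs hc i (i + 1)
  rw [Finset.sum_congr rfl h1, Finset.sum_neg_distrib,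
    aAt_swap n p q κs κo κd c hqp hgap hκd hκo hκs hc p q]
  ring

end Aux

/-- On training pairs, the prediction mixes the label with the rank difference
with memorization coefficient `m = α/(α + c̃⁻¹)`, where `α = 1 − 2δₒ/δₛ` and
`c̃ = c·δₛ`. -/
theorem train_prediction_mixes_label_and_ranks
    (n p q : ℕ) (κs κo κd c : ℝ)
    (hn : 3 ≤ n) (hq1 : 1 ≤ q) (hqp : q < p) (hpn : p ≤ n) (hgap : 2 ≤ p - q)
    (hκd : 0 ≤ κd) (hκo : κd < κo) (hκs : 2 * (κo - κd) ≤ κs - κd) (hc : 0 < c) :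
    ∀ j k : ℕ, (j, k) ∈ T n p q →
      pred n p q κs κo κd c (j, k) =
        ((1 - 2 * (κo - κd) / (κs - κd)) /
            ((1 - 2 * (κo - κd) / (κs - κd)) + (c * (κs - κd))⁻¹)) * lab p q (j, k) +
        (1 - (1 - 2 * (κo - κd) / (κs - κd)) /
            ((1 - 2 * (κo - κd) / (κs - κd)) + (c * (κs - κd))⁻¹)) *
          (rank n p q κs κo κd c j - rank n p q κs κo κd c k) := by
  intro j k hjk
  have hδs : (0:ℝ) < κs - κd := by linarith
  have hδo : (0:ℝ) < κo - κd := by linarith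
  have hpred : pred n p q κs κo κd c (j, k)
      = ∑ v ∈ T n p q, ker κs κo κd (j, k) v * aAt n p q κs κo κd c v := by
    unfold pred
    calc ∑ u' : ↥(T n p q), ker κs κo κd (j, k) u'.1 * dual n p q κs κo κd c u'
        = ∑ u' : ↥(T n p q), ker κs κo κd (j, k) u'.1 * aAt n p q κs κo κd c u'.1 :=
          Finset.sum_congr rfl fun w _ => by rw [aAt_coe]
      _ = _ := Finset.sum_coe_sort (T n p q)
            (fun v => ker κs κo κd (j, k) v * aAt n p q κs κo κd c v)
  have hfst : ((j, k) : ℕ × ℕ).1 = j := rfl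
  have hsnd : ((j, k) : ℕ × ℕ).2 = k := rfl
  have hterm : ∀ v ∈ T n p q, ker κs κo κd (j, k) v * aAt n p q κs κo κd c v
      = κd * aAt n p q κs κo κd c v
        + (κo - κd) * ((if v.1 = j then aAt n p q κs κo κd c v else 0)
            + (if v.2 = k then aAt n p q κs κo κd c v else 0))
        + (κs - 2 * κo + κd) * (if (j, k) = v then aAt n p q κs κo κd c v else 0) := by
    intro v _
    rw [ker_decomp, hfst, hsnd]
    split_ifs <;> ring
  have hexp : ∑ v ∈ T n p q, ker κs κo κd (j, k) v * aAt n p q κs κo κd c v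
      = rank n p q κs κo κd c j - rank n p q κs κo κd c k
        + (κs - 2 * κo + κd) * aAt n p q κs κo κd c (j, k) := by
    rw [Finset.sum_congr rfl hterm, Finset.sum_add_distrib, Finset.sum_add_distrib,
      ← Finset.mul_sum, ← Finset.mul_sum, ← Finset.mul_sum, Finset.sum_add_distrib,
      sum_all n p q κs κo κd c hqp hgap hκd hκo hκs hc,
      sum_fst n p q κs κo κd c hqp hgap hκd hκo hκs hc j,
      sum_snd n p q κs κo κd c hqp hgap hκd hκo hκs hc k,
      Finset.sum_ite_eq (T n p q) (j, k) (aAt n p q κs κo κd c), if_pos hjk]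
    simp only [rank]
    ring
  have heq := aAt_eq n p q κs κo κd c hκd hκo hκs hc hjk
  have hkey : pred n p q κs κo κd c (j, k) + c⁻¹ * aAt n p q κs κo κd c (j, k)
      = lab p q (j, k) := by rw [hpred]; exact heq
  have hkey2 : pred n p q κs κo κd c (j, k)
      = rank n p q κs κo κd c j - rank n p q κs κo κd c k
        + (κs - 2 * κo + κd) * aAt n p q κs κo κd c (j, k) := by rw [hpred, hexp]
  have ha : aAt n p q κs κo κd c (j, k)
      = c * (lab p q (j, k) - pred n p q κs κo κd c (j, k)) := by
    have h1 : c⁻¹ * aAt n p q κs κo κd c (j, k)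
        = lab p q (j, k) - pred n p q κs κo κd c (j, k) := by linarith [hkey]
    calc aAt n p q κs κo κd c (j, k)
        = c * (c⁻¹ * aAt n p q κs κo κd c (j, k)) := by
          rw [← mul_assoc, mul_inv_cancel₀ hc.ne', one_mul]
      _ = _ := by rw [h1]
  rw [ha] at hkey2
  have hden : (0:ℝ) < 1 + c * (κs - 2 * κo + κd) := by nlinarith
  have hP : pred n p q κs κo κd c (j, k)
      = (rank n p q κs κo κd c j - rank n p q κs κo κd c k
          + c * (κs - 2 * κo + κd) * lab p q (j, k)) / (1 + c * (κs - 2 * κo + κd)) := by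
    rw [eq_div_iff hden.ne']
    linear_combination hkey2
  have hm : (0:ℝ) < (1 - 2 * (κo - κd) / (κs - κd)) + (c * (κs - κd))⁻¹ := by
    have h1 : 2 * (κo - κd) / (κs - κd) ≤ 1 := by
      rw [div_le_one hδs]; linarith
    have h2 : (0:ℝ) < (c * (κs - κd))⁻¹ := inv_pos.mpr (by positivity)
    linarith
  have hne1 : κs - κd ≠ 0 := hδs.ne'
  have hne2 : c ≠ 0 := hc.ne'
  have hne3 : (1 - 2 * (κo - κd) / (κs - κd)) + (c * (κs - κd))⁻¹ ≠ 0 := hm.ne'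
  have hne4 : 1 + c * (κs - 2 * κo + κd) ≠ 0 := hden.ne'
  have hmeq : (1 - 2 * (κo - κd) / (κs - κd)) /
      ((1 - 2 * (κo - κd) / (κs - κd)) + (c * (κs - κd))⁻¹)
      = c * (κs - 2 * κo + κd) / (1 + c * (κs - 2 * κo + κd)) := by
    rw [div_eq_div_iff hne3 hne4]
    field_simp
    ring
  rw [hP, hmeq]
  field_simp
  ring


end TIExc
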